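/- In the setting of a left A-bialgebra H, if M and N are left H-modules, then M ⊗_A N (tensor over A using the A-module structures restricted from H) carries a natural left H-module structure via the comultiplication Δ : H → H ⊗̄_A H, and for M = A (with the H-action u·a = ε(ua)) the resulting H-module structure on A ⊗_A N ≅ N agrees with the original one on N. -/

import Mathlib

set_option linter.unusedSectionVars false
set_option maxHeartbeats 1000000

open TensorProduct

section Aux
variable {k A H M N : Type*} [Field k] [CommRing A] [Algebra k A]
    [Ring H] [Algebra k H] {ι : A →ₐ[k] H}
    [Module A H] (hAH : ∀ (a : A) (u : H), a • u = ι a * u)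
    [SMulCommClass A k H] [SMulCommClass A k A]
    [AddCommGroup M] [Module k M] [Module A M] [SMulCommClass A k M]
    [AddCommGroup N] [Module k N] [Module A N] [SMulCommClass A k N]
    (ρM : H →ₐ[k] Module.End k M) (hρM : ∀ (a : A) (m : M), ρM (ι a) m = a • m)
    (ρN : H →ₐ[k] Module.End k N) (hρN : ∀ (a : A) (n : N), ρN (ι a) n = a • n)

noncomputable def Fb (m : M) (n : N) : H ⊗[A] H →ₗ[A] M ⊗[A] N :=
  TensorProduct.lift
  { toFun := fun u =>
    { toFun := fun v => ρM u m ⊗ₜ[A] ρN v n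
      map_add' := fun v w => by simp [map_add, tmul_add]
      map_smul' := fun a v => by
        simp only [RingHom.id_apply]
        rw [hAH a v, map_mul, Module.End.mul_apply, hρN, tmul_smul] }
    map_add' := fun u v => LinearMap.ext fun w => by
      simp [map_add, add_tmul]
    map_smul' := fun a u => LinearMap.ext fun w => by
      simp only [RingHom.id_apply, LinearMap.coe_mk, AddHom.coe_mk, LinearMap.smul_apply]
      rw [hAH a u, map_mul, Module.End.mul_apply, hρM, smul_tmul'] }

lemma Fb_tmul (m : M) (n : N) (u v : H) :
    Fb hAH ρM hρM ρN hρN m n (u ⊗ₜ[A] v) = ρM u m ⊗ₜ[A] ρN v n := rfl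

lemma Fb_add_left (m m' : M) (n : N) (t : H ⊗[A] H) :
    Fb hAH ρM hρM ρN hρN (m + m') n t
      = Fb hAH ρM hρM ρN hρN m n t + Fb hAH ρM hρM ρN hρN m' n t := by
  induction t using TensorProduct.induction_on with
  | zero => simp
  | tmul u v => simp [Fb_tmul, map_add, add_tmul]
  | add x y hx hy => simp only [map_add, hx, hy]; abel

lemma Fb_add_right (m : M) (n n' : N) (t : H ⊗[A] H) :
    Fb hAH ρM hρM ρN hρN m (n + n') t
      = Fb hAH ρM hρM ρN hρN m n t + Fb hAH ρM hρM ρN hρN m n' t := by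
  induction t using TensorProduct.induction_on with
  | zero => simp
  | tmul u v => simp [Fb_tmul, map_add, tmul_add]
  | add x y hx hy => simp only [map_add, hx, hy]; abel

lemma Fb_zero_left (n : N) (t : H ⊗[A] H) :
    Fb hAH ρM hρM ρN hρN (0 : M) n t = 0 := by
  induction t using TensorProduct.induction_on with
  | zero => simp
  | tmul u v => simp [Fb_tmul]
  | add x y hx hy => simp [hx, hy]

lemma Fb_zero_right (m : M) (t : H ⊗[A] H) :
    Fb hAH ρM hρM ρN hρN m (0 : N) t = 0 := by
  induction t using TensorProduct.induction_on with
  | zero => simp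
  | tmul u v => simp [Fb_tmul]
  | add x y hx hy => simp [hx, hy]

lemma Fb_ksmul (cc : k) (m : M) (n : N) (t : H ⊗[A] H) :
    Fb hAH ρM hρM ρN hρN m n (cc • t) = cc • Fb hAH ρM hρM ρN hρN m n t := by
  induction t using TensorProduct.induction_on with
  | zero => simp
  | tmul u v =>
    rw [smul_tmul', Fb_tmul, Fb_tmul, map_smul, LinearMap.smul_apply, smul_tmul']
  | add x y hx hy => simp [smul_add, hx, hy]

lemma Fb_ksmul_left (cc : k) (m : M) (n : N) (t : H ⊗[A] H) :
    Fb hAH ρM hρM ρN hρN (cc • m) n t = cc • Fb hAH ρM hρM ρN hρN m n t := by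
  induction t using TensorProduct.induction_on with
  | zero => simp
  | tmul u v => rw [Fb_tmul, Fb_tmul, map_smul, smul_tmul']
  | add x y hx hy => simp [smul_add, hx, hy]


variable (Δ : H →ₗ[k] H ⊗[A] H) (c : H → ℕ) (u1 u2 : (u : H) → Fin (c u) → H)
    (hrep : ∀ u : H, Δ u = ∑ i, u1 u i ⊗ₜ[A] u2 u i)
    (hΔbar : ∀ (u : H) (a : A),
      ∑ i, (u1 u i * ι a) ⊗ₜ[A] u2 u i = ∑ i, u1 u i ⊗ₜ[A] (u2 u i * ι a))

include hrep hΔbar in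
lemma Fb_bal (u : H) (a : A) (m : M) (n : N) :
    Fb hAH ρM hρM ρN hρN (a • m) n (Δ u) = Fb hAH ρM hρM ρN hρN m (a • n) (Δ u) := by
  have key : Fb hAH ρM hρM ρN hρN m n (∑ i, (u1 u i * ι a) ⊗ₜ[A] u2 u i)
      = Fb hAH ρM hρM ρN hρN m n (∑ i, u1 u i ⊗ₜ[A] (u2 u i * ι a)) := by
    rw [hΔbar]
  rw [hrep, map_sum, map_sum]
  rw [map_sum, map_sum] at key
  calc (∑ i, Fb hAH ρM hρM ρN hρN (a • m) n (u1 u i ⊗ₜ[A] u2 u i))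
      = ∑ i, Fb hAH ρM hρM ρN hρN m n ((u1 u i * ι a) ⊗ₜ[A] u2 u i) := by
        refine Finset.sum_congr rfl fun i _ => ?_
        rw [Fb_tmul, Fb_tmul, ← hρM a m, ← Module.End.mul_apply, ← map_mul]
    _ = ∑ i, Fb hAH ρM hρM ρN hρN m n (u1 u i ⊗ₜ[A] (u2 u i * ι a)) := key
    _ = ∑ i, Fb hAH ρM hρM ρN hρN m (a • n) (u1 u i ⊗ₜ[A] u2 u i) := by
        refine Finset.sum_congr rfl fun i _ => ?_
        rw [Fb_tmul, Fb_tmul, map_mul, Module.End.mul_apply, hρN]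

noncomputable def phi (u : H) : M ⊗[A] N →ₗ[k] M ⊗[A] N :=
  { toFun := TensorProduct.liftAddHom
      (AddMonoidHom.mk' (fun m => AddMonoidHom.mk'
          (fun n => Fb hAH ρM hρM ρN hρN m n (Δ u))
          (fun n n' => Fb_add_right hAH ρM hρM ρN hρN m n n' (Δ u)))
        (fun m m' => AddMonoidHom.ext fun n =>
          Fb_add_left hAH ρM hρM ρN hρN m m' n (Δ u)))
      (fun a m n => Fb_bal hAH ρM hρM ρN hρN Δ c u1 u2 hrep hΔbar u a m n)
    map_add' := fun x y => map_add _ x y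
    map_smul' := fun cc x => by
      simp only [RingHom.id_apply]
      induction x using TensorProduct.induction_on with
      | zero => simp
      | tmul m n =>
        rw [smul_tmul']
        exact Fb_ksmul_left hAH ρM hρM ρN hρN cc m n (Δ u)
      | add x y hx hy => rw [smul_add, map_add, map_add, hx, hy, smul_add] }

lemma phi_tmul (u : H) (m : M) (n : N) :
    phi hAH ρM hρM ρN hρN Δ c u1 u2 hrep hΔbar u (m ⊗ₜ[A] n)
      = Fb hAH ρM hρM ρN hρN m n (Δ u) := by
  simp only [phi, LinearMap.coe_mk, AddHom.coe_mk, TensorProduct.liftAddHom_tmul]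
  rfl


variable (hΔA : ∀ a : A, Δ (ι a) = (ι a) ⊗ₜ[A] (1 : H))
    (hΔmul : ∀ u v : H,
      Δ (u * v) = ∑ i, ∑ j, (u1 u i * u1 v j) ⊗ₜ[A] (u2 u i * u2 v j))

noncomputable def actL : H →ₗ[k] Module.End k (M ⊗[A] N) :=
  { toFun := phi hAH ρM hρM ρN hρN Δ c u1 u2 hrep hΔbar
    map_add' := fun u v => LinearMap.ext fun x => by
      induction x using TensorProduct.induction_on with
      | zero => simp
      | tmul m n =>
        simp only [LinearMap.add_apply, phi_tmul]
        rw [map_add, map_add]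
      | add x y hx hy =>
        simp only [map_add, LinearMap.add_apply] at hx hy ⊢
        rw [hx, hy]
    map_smul' := fun cc u => LinearMap.ext fun x => by
      induction x using TensorProduct.induction_on with
      | zero => simp
      | tmul m n =>
        simp only [RingHom.id_apply, LinearMap.smul_apply, phi_tmul]
        rw [map_smul, Fb_ksmul]
      | add x y hx hy =>
        simp only [RingHom.id_apply, LinearMap.smul_apply, map_add, smul_add] at hx hy ⊢
        rw [hx, hy] }

include hΔA in
lemma act_one : phi hAH ρM hρM ρN hρN Δ c u1 u2 hrep hΔbar (1 : H) = LinearMap.id := by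
  refine LinearMap.ext fun x => ?_
  induction x using TensorProduct.induction_on with
  | zero => simp
  | tmul m n =>
    have h1 : Δ (1 : H) = (1 : H) ⊗ₜ[A] (1 : H) := by
      rw [← map_one ι, hΔA, map_one]
    rw [LinearMap.id_apply, phi_tmul, h1, Fb_tmul, map_one, map_one,
      Module.End.one_apply, Module.End.one_apply]
  | add x y hx hy => rw [map_add, hx, hy, LinearMap.id_apply, LinearMap.id_apply,
      LinearMap.id_apply]

include hΔmul in
lemma act_mul (u v : H) :
    phi hAH ρM hρM ρN hρN Δ c u1 u2 hrep hΔbar (u * v)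
      = phi hAH ρM hρM ρN hρN Δ c u1 u2 hrep hΔbar u
          ∘ₗ phi hAH ρM hρM ρN hρN Δ c u1 u2 hrep hΔbar v := by
  refine LinearMap.ext fun x => ?_
  induction x using TensorProduct.induction_on with
  | zero => simp
  | tmul m n =>
    rw [LinearMap.comp_apply, phi_tmul, phi_tmul, hΔmul, hrep v, map_sum, map_sum]
    simp only [map_sum, Fb_tmul, phi_tmul, map_mul, Module.End.mul_apply]
    simp only [hrep u, map_sum, Fb_tmul]
    exact Finset.sum_comm
  | add x y hx hy => simp only [map_add, LinearMap.comp_apply] at hx hy ⊢; rw [hx, hy]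

end Aux


open TensorProduct in
/- STATEMENT 10: Let H be a left A-bialgebra (counit ε : H → A, comultiplication
Δ : H → H ⊗̄_A H, written below via chosen finite-sum representations
Δu = Σᵢ u1ᵢ ⊗ u2ᵢ, with the left-bialgebra axioms: Δ identical on A, Δ landing
in H ⊗̄_A H, Δ multiplicative, and the counit law Σ ε(u⁽¹⁾)·u⁽²⁾ = u).
If M, N are left H-modules (actions ρM, ρN restricting to the A-actions via
A ⊆ H), then M ⊗_A N carries a left H-module structure with
u·(m ⊗ n) = Σᵢ (u1ᵢ·m) ⊗ (u2ᵢ·n); and for M = A with its H-action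
u·a = ε(u·a), the resulting structure on A ⊗_A N ≅ N agrees with that of N. -/
theorem stmt10 {k A H M N : Type*} [Field k] [CommRing A] [Algebra k A]
    [Ring H] [Algebra k H] (ι : A →ₐ[k] H)
    [Module A H] (hAH : ∀ (a : A) (u : H), a • u = ι a * u)
    [SMulCommClass A k H] [SMulCommClass A k A]
    [AddCommGroup M] [Module k M] [Module A M] [SMulCommClass A k M]
    [AddCommGroup N] [Module k N] [Module A N] [SMulCommClass A k N]
    (ρM : H →ₐ[k] Module.End k M) (hρM : ∀ (a : A) (m : M), ρM (ι a) m = a • m)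
    (ρN : H →ₐ[k] Module.End k N) (hρN : ∀ (a : A) (n : N), ρN (ι a) n = a • n)
    (ε : H →ₗ[A] A)
    (Δ : H →ₗ[k] H ⊗[A] H)
    (c : H → ℕ) (u1 u2 : (u : H) → Fin (c u) → H)
    (hrep : ∀ u : H, Δ u = ∑ i, u1 u i ⊗ₜ[A] u2 u i)
    (hΔA : ∀ a : A, Δ (ι a) = (ι a) ⊗ₜ[A] (1 : H))
    (hΔbar : ∀ (u : H) (a : A),
      ∑ i, (u1 u i * ι a) ⊗ₜ[A] u2 u i = ∑ i, u1 u i ⊗ₜ[A] (u2 u i * ι a))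
    (hΔmul : ∀ u v : H,
      Δ (u * v) = ∑ i, ∑ j, (u1 u i * u1 v j) ⊗ₜ[A] (u2 u i * u2 v j))
    (hcounit : ∀ u : H, ∑ i, ι (ε (u1 u i)) * u2 u i = u) :
    (∃ act : H →ₐ[k] Module.End k (M ⊗[A] N),
      ∀ (u : H) (m : M) (n : N),
        act u (m ⊗ₜ[A] n) = ∑ i, (ρM (u1 u i) m) ⊗ₜ[A] (ρN (u2 u i) n)) ∧
    (∀ act' : H →ₐ[k] Module.End k (A ⊗[A] N),
      (∀ (u : H) (a : A) (n : N),
        act' u (a ⊗ₜ[A] n) = ∑ i, (ε (u1 u i * ι a)) ⊗ₜ[A] (ρN (u2 u i) n)) →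
      ∀ (u : H) (n : N), act' u ((1 : A) ⊗ₜ[A] n) = (1 : A) ⊗ₜ[A] (ρN u n)) := by
  constructor
  · refine ⟨AlgHom.ofLinearMap (actL hAH ρM hρM ρN hρN Δ c u1 u2 hrep hΔbar)
      ?_ ?_, fun u m n => ?_⟩
    · show phi hAH ρM hρM ρN hρN Δ c u1 u2 hrep hΔbar 1 = 1
      rw [act_one hAH ρM hρM ρN hρN Δ c u1 u2 hrep hΔbar hΔA, Module.End.one_eq_id]
    · intro u v
      show phi hAH ρM hρM ρN hρN Δ c u1 u2 hrep hΔbar (u * v) = _ * _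
      rw [Module.End.mul_eq_comp]
      exact act_mul hAH ρM hρM ρN hρN Δ c u1 u2 hrep hΔbar hΔmul u v
    · show phi hAH ρM hρM ρN hρN Δ c u1 u2 hrep hΔbar u (m ⊗ₜ[A] n) = _
      rw [phi_tmul, hrep u, map_sum]
      exact Finset.sum_congr rfl fun i _ =>
        Fb_tmul hAH ρM hρM ρN hρN m n (u1 u i) (u2 u i)
  · intro act' hact' u n
    rw [hact' u 1 n]
    conv_rhs => rw [← hcounit u]
    rw [map_sum, LinearMap.sum_apply, tmul_sum]
    refine Finset.sum_congr rfl fun i _ => ?_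
    rw [map_one, mul_one, map_mul, Module.End.mul_apply, hρN]
    rw [← smul_tmul, smul_eq_mul, mul_one]
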